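/- arXiv:2110.07755 — 4 statements merged into one kernel-verified Lean document; each statement's English description precedes it below -/
import Mathlib

section
/- If 0 ≤ x_i^1 ≤ 1 for all i, h·δ_i ≤ 1 and h·∑_j β_{ij} < 1 for all i (with β_{ij}, δ_i ≥ 0), then the discrete-time SIS dynamics x_i^{k+1} = x_i^k + h(1 - x_i^k)·∑_j β_{ij} x_j^k - h·δ_i x_i^k satisfy 0 ≤ x_i^k ≤ 1 for all i and all k ≥ 1. -/
theorem stmt0 (n : ℕ) (h : ℝ) (β : Fin n → Fin n → ℝ) (δ : Fin n → ℝ)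
    (x : ℕ → Fin n → ℝ)
    (hh : 0 < h)
    (hβ : ∀ i j, 0 ≤ β i j) (hδ : ∀ i, 0 ≤ δ i)
    (hδ1 : ∀ i, h * δ i ≤ 1) (hβ1 : ∀ i, h * ∑ j, β i j < 1)
    (hx1 : ∀ i, 0 ≤ x 1 i ∧ x 1 i ≤ 1)
    (hdyn : ∀ k, 1 ≤ k → ∀ i,
      x (k+1) i = x k i + h * (1 - x k i) * (∑ j, β i j * x k j) - h * δ i * x k i) :
    ∀ k, 1 ≤ k → ∀ i, 0 ≤ x k i ∧ x k i ≤ 1 := by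
  intro k
  induction k with
  | zero => intro hk; omega
  | succ m ih =>
    intro _ i
    rcases Nat.eq_or_lt_of_le (Nat.one_le_iff_ne_zero.mpr (Nat.succ_ne_zero m)) with he | hlt
    · obtain rfl : m = 0 := by omega
      simpa using hx1 i
    have hm : 1 ≤ m := Nat.lt_succ_iff.mp hlt
    have IH := ih hm
    obtain ⟨h0, h1⟩ := IH i
    have hS0 : 0 ≤ ∑ j, β i j * x m j :=
      Finset.sum_nonneg fun j _ => mul_nonneg (hβ i j) ((IH j).1)
    have hS1 : ∑ j, β i j * x m j ≤ ∑ j, β i j :=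
      Finset.sum_le_sum fun j _ => by
        nlinarith [(IH j).2, hβ i j]
    rw [hdyn m hm i]
    constructor
    · nlinarith [hδ1 i, hδ i, mul_nonneg (mul_nonneg hh.le (sub_nonneg.mpr h1)) hS0]
    · nlinarith [hβ1 i, mul_le_mul_of_nonneg_left hS1 hh.le,
        mul_nonneg (mul_nonneg hh.le (hδ i)) h0, sub_nonneg.mpr h1]
end

section
/- Let x^k evolve by the nonlinear dynamics x_i^{k+1} = x_i^k + h(1 - x_i^k)·∑_j β_{ij} x_j^k - h·δ_i x_i^k with x_i^k ∈ [0,1], and let y^k evolve by the linear dynamics y^{k+1} = A y^k where A_{ii} = 1 - h·δ_i ≥ 0 and A_{ij} = h·β_{ij} ≥ 0 for i ≠ j. If y^1 = x^1 (entrywise, with entries in [0,1]), then x_i^k ≤ y_i^k for all i and all k, provided x_i^k remains in [0,1] for all k. -/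
theorem stmt2 (n : ℕ) (h : ℝ) (β : Fin n → Fin n → ℝ) (δ : Fin n → ℝ)
    (A : Matrix (Fin n) (Fin n) ℝ)
    (x y : ℕ → Fin n → ℝ)
    (hh : 0 < h)
    (hβ : ∀ i j, i ≠ j → 0 ≤ β i j) (hβii : ∀ i, β i i = 0)
    (hδ : ∀ i, 0 ≤ δ i)
    (hAdiag : ∀ i, A i i = 1 - h * δ i) (hAdnn : ∀ i, 0 ≤ 1 - h * δ i)
    (hAoff : ∀ i j, i ≠ j → A i j = h * β i j)
    (hbox : ∀ k i, 0 ≤ x k i ∧ x k i ≤ 1)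
    (hxdyn : ∀ k, ∀ i,
      x (k+1) i = x k i + h * (1 - x k i) * (∑ j, β i j * x k j) - h * δ i * x k i)
    (hydyn : ∀ k, y (k+1) = A.mulVec (y k))
    (hinit : y 1 = x 1) :
    ∀ k, 1 ≤ k → ∀ i, x k i ≤ y k i := by
  have hAnn : ∀ i j, 0 ≤ A i j := by
    intro i j
    by_cases hij : i = j
    · subst hij; rw [hAdiag]; exact hAdnn i
    · rw [hAoff i j hij]
      exact mul_nonneg hh.le (hβ i j hij)
  have hβnn : ∀ i j, 0 ≤ β i j := by
    intro i j
    by_cases hij : i = j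
    · subst hij; rw [hβii]
    · exact hβ i j hij
  intro k hk
  induction k with
  | zero => omega
  | succ k ih =>
    rcases Nat.eq_or_lt_of_le hk with he | hlt
    · intro i
      have hk0 : k = 0 := by omega
      subst hk0
      rw [hinit]
    · have hk1 : 1 ≤ k := by omega
      have ihk := ih hk1
      intro i
      have hxA : x (k+1) i ≤ ∑ j, A i j * x k j := by
        have hsum : ∑ j, A i j * x k j
            = (1 - h * δ i) * x k i + h * ∑ j, β i j * x k j := by
          have hoff : ∑ j ∈ Finset.univ \ {i}, A i j * x k j
              = ∑ j ∈ Finset.univ \ {i}, h * (β i j * x k j) :=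
            Finset.sum_congr rfl fun j hj => by
              rw [hAoff i j (by simpa [eq_comm] using (Finset.mem_sdiff.mp hj).2),
                  mul_assoc]
          rw [Finset.sum_eq_add_sum_sdiff_singleton_of_mem (Finset.mem_univ i)
                (fun j => A i j * x k j),
              Finset.sum_eq_add_sum_sdiff_singleton_of_mem (Finset.mem_univ i)
                (fun j => β i j * x k j), hAdiag, hβii, hoff, ← Finset.mul_sum]
          ring
        rw [hxdyn k i, hsum]
        have hS : 0 ≤ ∑ j, β i j * x k j :=
          Finset.sum_nonneg fun j _ => mul_nonneg (hβnn i j) (hbox k j).1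
        nlinarith [mul_nonneg (mul_nonneg hh.le (hbox k i).1) hS]
      have hAy : ∑ j, A i j * x k j ≤ ∑ j, A i j * y k j := by
        apply Finset.sum_le_sum
        intro j _
        exact mul_le_mul_of_nonneg_left (ihk j) (hAnn i j)
      rw [hydyn k]
      calc x (k+1) i ≤ ∑ j, A i j * x k j := hxA
        _ ≤ ∑ j, A i j * y k j := hAy
        _ = A.mulVec (y k) i := by simp [Matrix.mulVec, dotProduct]
end

section
/- Suppose A^1, ..., A^K are n×n matrices with nonnegative entries, C ∈ ℝ^n is a nonnegative row vector, α ∈ (0,1], and p^1, ..., p^K are nonnegative row vectors satisfying p^k ≥ C + α·p^{k+1}·A^k (entrywise) for k = 1, ..., K−1 and p^K ≥ C + α·p^K·A^K. Let x^{k+1} = A^k x^k for k < K and x^{k+1} = A^K x^k for k ≥ K, with x^1 entrywise nonnegative. Then p^1 · x^1 ≥ ∑_{k=1}^∞ α^k · C · x^k (in particular the series converges and is bounded by p^1 x^1, assuming α ≤ 1 and using p^K x^L ≥ 0). -/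
open Matrix

theorem stmt3 (n K : ℕ) (hK : 1 ≤ K)
    (A : ℕ → Matrix (Fin n) (Fin n) ℝ)
    (C : Fin n → ℝ) (α : ℝ) (p : ℕ → Fin n → ℝ) (x : ℕ → Fin n → ℝ)
    (hA : ∀ k i j, 0 ≤ A k i j) (hC : ∀ i, 0 ≤ C i)
    (hα0 : 0 < α) (hα1 : α ≤ 1)
    (hp : ∀ k i, 0 ≤ p k i)
    (hpk : ∀ k, 1 ≤ k → k < K → ∀ j, C j + α * Matrix.vecMul (p (k+1)) (A k) j ≤ p k j)
    (hpK : ∀ j, C j + α * Matrix.vecMul (p K) (A K) j ≤ p K j)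
    (hx1 : ∀ i, 0 ≤ x 1 i)
    (hxdynlt : ∀ k, 1 ≤ k → k < K → x (k+1) = (A k).mulVec (x k))
    (hxdynge : ∀ k, K ≤ k → x (k+1) = (A K).mulVec (x k)) :
    Summable (fun k : ℕ => α ^ (k+1) * (C ⬝ᵥ x (k+1))) ∧
      ∑' k : ℕ, α ^ (k+1) * (C ⬝ᵥ x (k+1)) ≤ p 1 ⬝ᵥ x 1 := by
  -- merged matrices and certificates
  set A' : ℕ → Matrix (Fin n) (Fin n) ℝ := fun k => A (min k K) with hA'
  set P : ℕ → Fin n → ℝ := fun k => p (min k K) with hP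
  have hA'nn : ∀ k i j, 0 ≤ A' k i j := fun k i j => hA _ i j
  have hPnn : ∀ k i, 0 ≤ P k i := fun k i => hp _ i
  have hxdyn : ∀ k, 1 ≤ k → x (k+1) = (A' k).mulVec (x k) := by
    intro k hk
    rcases lt_or_ge k K with h | h
    · have : min k K = k := min_eq_left h.le
      rw [hA']; simp only [this]; exact hxdynlt k hk h
    · have : min k K = K := min_eq_right h
      rw [hA']; simp only [this]; exact hxdynge k h
  have hPineq : ∀ k, 1 ≤ k → ∀ j,
      C j + α * Matrix.vecMul (P (k+1)) (A' k) j ≤ P k j := by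
    intro k hk j
    rcases lt_or_ge k K with h | h
    · have h1 : min k K = k := min_eq_left h.le
      have h2 : min (k+1) K = k+1 := min_eq_left h
      simp only [hP, hA', h1, h2]
      exact hpk k hk h j
    · have h1 : min k K = K := min_eq_right h
      have h2 : min (k+1) K = K := min_eq_right (le_trans h (Nat.le_succ k))
      simp only [hP, hA', h1, h2]
      exact hpK j
  -- nonnegativity of trajectory
  have hxnn : ∀ k, 1 ≤ k → ∀ i, 0 ≤ x k i := by
    intro k hk
    induction k with
    | zero => omega
    | succ m ih =>
      rcases Nat.eq_or_lt_of_le hk with h | h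
      · intro i
        have hm0 : m = 0 := by omega
        subst hm0
        exact hx1 i
      · have hm : 1 ≤ m := by omega
        intro i
        rw [hxdyn m hm]
        simp only [Matrix.mulVec, dotProduct]
        exact Finset.sum_nonneg fun j _ => mul_nonneg (hA'nn m i j) (ih hm j)
  have hCx : ∀ k, 0 ≤ C ⬝ᵥ x (k+1) := fun k =>
    Finset.sum_nonneg fun j _ => mul_nonneg (hC j) (hxnn (k+1) (by omega) j)
  have hPx : ∀ m, 0 ≤ P (m+1) ⬝ᵥ x (m+1) := fun m =>
    Finset.sum_nonneg fun j _ => mul_nonneg (hPnn _ j) (hxnn (m+1) (by omega) j)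
  -- key partial sum bound
  have key : ∀ m : ℕ,
      (∑ k ∈ Finset.range m, α ^ (k+1) * (C ⬝ᵥ x (k+1)))
        + α ^ m * (P (m+1) ⬝ᵥ x (m+1)) ≤ p 1 ⬝ᵥ x 1 := by
    intro m
    induction m with
    | zero =>
      simp only [Finset.range_zero, Finset.sum_empty, pow_zero, one_mul, zero_add]
      have : min 1 K = 1 := min_eq_left hK
      simp only [hP, this]
      exact le_rfl
    | succ m ih =>
      rw [Finset.sum_range_succ]
      have hstep : α ^ (m+1) * (C ⬝ᵥ x (m+1)) + α ^ (m+1) * (P (m+2) ⬝ᵥ x (m+2))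
          ≤ α ^ m * (P (m+1) ⬝ᵥ x (m+1)) := by
        have hdot : (fun j => C j + α * Matrix.vecMul (P (m+2)) (A' (m+1)) j) ⬝ᵥ x (m+1)
            ≤ P (m+1) ⬝ᵥ x (m+1) := by
          refine Finset.sum_le_sum fun j _ => ?_
          exact mul_le_mul_of_nonneg_right (hPineq (m+1) (by omega) j)
            (hxnn (m+1) (by omega) j)
        have hexp : (fun j => C j + α * Matrix.vecMul (P (m+2)) (A' (m+1)) j) ⬝ᵥ x (m+1)
            = C ⬝ᵥ x (m+1) + α * (P (m+2) ⬝ᵥ x (m+2)) := by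
          have hx2 : x (m+2) = (A' (m+1)).mulVec (x (m+1)) := hxdyn (m+1) (by omega)
          rw [hx2, Matrix.dotProduct_mulVec]
          simp only [dotProduct, add_mul, Finset.sum_add_distrib, mul_assoc,
            Finset.mul_sum]
        rw [hexp] at hdot
        have h1 : α ^ m * (C ⬝ᵥ x (m+1) + α * (P (m+2) ⬝ᵥ x (m+2)))
            ≤ α ^ m * (P (m+1) ⬝ᵥ x (m+1)) :=
          mul_le_mul_of_nonneg_left hdot (pow_nonneg hα0.le m)
        have h2 : α ^ (m+1) * (C ⬝ᵥ x (m+1)) ≤ α ^ m * (C ⬝ᵥ x (m+1)) :=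
          mul_le_mul_of_nonneg_right
            (pow_le_pow_of_le_one hα0.le hα1 (Nat.le_succ m)) (hCx m)
        calc α ^ (m+1) * (C ⬝ᵥ x (m+1)) + α ^ (m+1) * (P (m+2) ⬝ᵥ x (m+2))
            ≤ α ^ m * (C ⬝ᵥ x (m+1)) + α ^ m * (α * (P (m+2) ⬝ᵥ x (m+2))) := by
              have : α ^ (m+1) = α ^ m * α := by ring
              rw [this]; nlinarith [hCx m]
          _ = α ^ m * (C ⬝ᵥ x (m+1) + α * (P (m+2) ⬝ᵥ x (m+2))) := by ring
          _ ≤ α ^ m * (P (m+1) ⬝ᵥ x (m+1)) := h1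
      calc (∑ k ∈ Finset.range m, α ^ (k+1) * (C ⬝ᵥ x (k+1)))
            + α ^ (m+1) * (C ⬝ᵥ x (m+1)) + α ^ (m+1) * (P (m+1+1) ⬝ᵥ x (m+1+1))
          ≤ (∑ k ∈ Finset.range m, α ^ (k+1) * (C ⬝ᵥ x (k+1)))
            + α ^ m * (P (m+1) ⬝ᵥ x (m+1)) := by
            have := hstep
            linarith
        _ ≤ p 1 ⬝ᵥ x 1 := ih
  have hbound : ∀ m : ℕ,
      (∑ k ∈ Finset.range m, α ^ (k+1) * (C ⬝ᵥ x (k+1))) ≤ p 1 ⬝ᵥ x 1 := by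
    intro m
    have h := key m
    have : 0 ≤ α ^ m * (P (m+1) ⬝ᵥ x (m+1)) :=
      mul_nonneg (pow_nonneg hα0.le m) (hPx m)
    linarith
  have hterm : ∀ k : ℕ, 0 ≤ α ^ (k+1) * (C ⬝ᵥ x (k+1)) := fun k =>
    mul_nonneg (pow_nonneg hα0.le _) (hCx k)
  have hsum : Summable (fun k : ℕ => α ^ (k+1) * (C ⬝ᵥ x (k+1))) :=
    summable_of_sum_range_le hterm hbound
  exact ⟨hsum, Summable.tsum_le_of_sum_range_le hsum hbound⟩
end

section
/- Let A be an n×n matrix with nonnegative entries, C a nonnegative row vector, α ∈ (0,1], and p a nonnegative row vector with p ≥ C + α·p·A entrywise. Then for every nonnegative x ∈ ℝ^n, the partial sums ∑_{k=1}^L α^k C A^{k-1} x are bounded above by p·x for all L, and hence ∑_{k=1}^∞ α^k C A^{k-1} x ≤ p·x. -/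
open Matrix

theorem stmt4 (n : ℕ) (A : Matrix (Fin n) (Fin n) ℝ) (C p x : Fin n → ℝ) (α : ℝ)
    (hA : ∀ i j, 0 ≤ A i j) (hC : ∀ i, 0 ≤ C i) (hp : ∀ i, 0 ≤ p i) (hx : ∀ i, 0 ≤ x i)
    (hα0 : 0 < α) (hα1 : α ≤ 1)
    (hineq : ∀ j, C j + α * Matrix.vecMul p A j ≤ p j) :
    (∀ L : ℕ, ∑ k ∈ Finset.range L, α ^ (k+1) * (C ⬝ᵥ (A ^ k).mulVec x) ≤ p ⬝ᵥ x) ∧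
      ∑' k : ℕ, α ^ (k+1) * (C ⬝ᵥ (A ^ k).mulVec x) ≤ p ⬝ᵥ x := by
  have hAk : ∀ k : ℕ, ∀ i, 0 ≤ (A ^ k).mulVec x i := by
    intro k
    induction k with
    | zero => simpa using hx
    | succ m ih =>
      intro i
      have h : (A ^ (m+1)).mulVec x = A.mulVec ((A ^ m).mulVec x) := by
        rw [pow_succ', ← Matrix.mulVec_mulVec]
      rw [h]
      simp only [Matrix.mulVec, dotProduct]
      exact Finset.sum_nonneg fun j _ => mul_nonneg (hA i j) (ih j)
  have hdotC : ∀ k : ℕ, 0 ≤ C ⬝ᵥ (A ^ k).mulVec x := fun k =>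
    Finset.sum_nonneg fun j _ => mul_nonneg (hC j) (hAk k j)
  have hdotp : ∀ k : ℕ, 0 ≤ p ⬝ᵥ (A ^ k).mulVec x := fun k =>
    Finset.sum_nonneg fun j _ => mul_nonneg (hp j) (hAk k j)
  have key : ∀ L : ℕ,
      (∑ k ∈ Finset.range L, α ^ (k+1) * (C ⬝ᵥ (A ^ k).mulVec x))
        + α ^ L * (p ⬝ᵥ (A ^ L).mulVec x) ≤ p ⬝ᵥ x := by
    intro L
    induction L with
    | zero => simp
    | succ m ih =>
      refine le_trans ?_ ih
      rw [Finset.sum_range_succ, add_assoc]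
      gcongr _ + ?_
      set v : Fin n → ℝ := (A ^ m).mulVec x with hv
      have hsplit : (A ^ (m+1)).mulVec x = A.mulVec v := by
        rw [pow_succ', ← Matrix.mulVec_mulVec]
      rw [hsplit]
      have hpa : p ⬝ᵥ A.mulVec v = Matrix.vecMul p A ⬝ᵥ v := Matrix.dotProduct_mulVec p A v
      rw [hpa]
      have hentry : C ⬝ᵥ v + α * (Matrix.vecMul p A ⬝ᵥ v) ≤ p ⬝ᵥ v := by
        have : ∑ j, (C j + α * Matrix.vecMul p A j) * v j ≤ ∑ j, p j * v j :=
          Finset.sum_le_sum fun j _ => mul_le_mul_of_nonneg_right (hineq j) (hAk m j)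
        calc C ⬝ᵥ v + α * (Matrix.vecMul p A ⬝ᵥ v)
            = ∑ j, (C j + α * Matrix.vecMul p A j) * v j := by
              simp [dotProduct, Finset.mul_sum, Finset.sum_add_distrib,
                add_mul, mul_assoc]
          _ ≤ ∑ j, p j * v j := this
          _ = p ⬝ᵥ v := rfl
      have hCv : 0 ≤ C ⬝ᵥ v := hdotC m
      have hpav : 0 ≤ Matrix.vecMul p A ⬝ᵥ v := by
        have := Matrix.dotProduct_mulVec p A v
        rw [← this]
        simp only [dotProduct, Matrix.mulVec]
        exact Finset.sum_nonneg fun j _ => mul_nonneg (hp j)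
          (Finset.sum_nonneg fun i _ => mul_nonneg (hA j i) (hAk m i))
      have hαm : (0:ℝ) ≤ α ^ m := pow_nonneg hα0.le m
      calc α ^ (m+1) * (C ⬝ᵥ v) + α ^ (m+1) * (Matrix.vecMul p A ⬝ᵥ v)
          = α ^ m * (α * (C ⬝ᵥ v) + α * (Matrix.vecMul p A ⬝ᵥ v)) := by ring
        _ ≤ α ^ m * (C ⬝ᵥ v + α * (Matrix.vecMul p A ⬝ᵥ v)) := by
            apply mul_le_mul_of_nonneg_left _ hαm
            have : α * (C ⬝ᵥ v) ≤ 1 * (C ⬝ᵥ v) := mul_le_mul_of_nonneg_right hα1 hCv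
            linarith
        _ ≤ α ^ m * (p ⬝ᵥ v) := mul_le_mul_of_nonneg_left hentry hαm
  have hpart : ∀ L : ℕ, ∑ k ∈ Finset.range L, α ^ (k+1) * (C ⬝ᵥ (A ^ k).mulVec x) ≤ p ⬝ᵥ x := by
    intro L
    refine le_trans (le_add_of_nonneg_right ?_) (key L)
    exact mul_nonneg (pow_nonneg hα0.le L) (hdotp L)
  refine ⟨hpart, ?_⟩
  have hnn : ∀ k : ℕ, 0 ≤ α ^ (k+1) * (C ⬝ᵥ (A ^ k).mulVec x) :=
    fun k => mul_nonneg (pow_nonneg hα0.le (k+1)) (hdotC k)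
  exact Summable.tsum_le_of_sum_range_le (summable_of_sum_range_le hnn hpart) hpart
end
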